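/- Let r ≥ 3 be odd and q = e^{2πi/r}, and define δ_{±,m} as (-1)^m q^{((r±1)/2)m^2 ± m}[m+1]. Then ∑_{m=0}^{(r-3)/2} [2m+1] δ_{±,2m} = ∑_{m=0}^{(r-3)/2} (-1)^m [m+1] δ_{±,m} = ∑_{m=0}^{(r-3)/2} q^{((r±1)/2)m^2 ± m} [m+1]^2. -/

import Mathlib

open Finset

/-- Quantum integer `[n] = (q^n - q^{-n})/(q - q^{-1})`. -/
noncomputable def qint (q : ℂ) (n : ℤ) : ℂ := (q ^ n - q ^ (-n)) / (q - q⁻¹)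

/-- `δ_{+,m} := (-1)^m q^{((r+1)/2)m² + m}[m+1]`. -/
noncomputable def deltaPlus (q : ℂ) (r : ℕ) (m : ℤ) : ℂ :=
  (-1 : ℂ) ^ m * q ^ ((((r : ℤ) + 1) / 2) * m ^ 2 + m) * qint q (m + 1)

/-- `δ_{-,m} := (-1)^m q^{((r-1)/2)m² - m}[m+1]`. -/
noncomputable def deltaMinus (q : ℂ) (r : ℕ) (m : ℤ) : ℂ :=
  (-1 : ℂ) ^ m * q ^ ((((r : ℤ) - 1) / 2) * m ^ 2 - m) * qint q (m + 1)

private lemma zpow_eq_of_aux {q : ℂ} {r : ℕ} (hq0 : q ≠ 0) (h1 : q ^ (r : ℤ) = 1)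
    {a b : ℤ} (c : ℤ) (h : a = b + (r : ℤ) * c) : q ^ a = q ^ b := by
  subst h
  rw [zpow_add₀ hq0, zpow_mul, h1, one_zpow, mul_one]

private lemma qint_symm_aux {q : ℂ} {r : ℕ} (hq0 : q ≠ 0) (h1 : q ^ (r : ℤ) = 1) (n : ℤ) :
    qint q ((r : ℤ) - n - 1) = - qint q (n + 1) := by
  unfold qint
  have e1 : q ^ ((r : ℤ) - n - 1) = q ^ (-(n + 1)) := zpow_eq_of_aux hq0 h1 1 (by ring)
  have e2 : q ^ (-((r : ℤ) - n - 1)) = q ^ (n + 1) := zpow_eq_of_aux hq0 h1 (-1) (by ring)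
  rw [e1, e2]
  ring

private lemma neg_one_zpow_symm_aux {r : ℕ} (hrodd : Odd (r : ℤ)) (n : ℤ) :
    ((-1 : ℂ)) ^ ((r : ℤ) - 2 - n) = -((-1 : ℂ)) ^ n := by
  obtain ⟨j, hj⟩ := hrodd
  rcases Int.even_or_odd n with he | ho
  · obtain ⟨c, hc⟩ := he
    rw [Odd.neg_one_zpow ⟨j - c - 1, by omega⟩, Even.neg_one_zpow ⟨c, hc⟩]
  · obtain ⟨c, hc⟩ := ho
    rw [Even.neg_one_zpow ⟨j - 1 - c, by omega⟩, Odd.neg_one_zpow ⟨c, hc⟩]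
    ring

private lemma deltaPlus_symm_aux {q : ℂ} {r : ℕ} (hq0 : q ≠ 0) (h1 : q ^ (r : ℤ) = 1)
    (hrodd : Odd (r : ℤ)) (n : ℤ) :
    deltaPlus q r ((r : ℤ) - 2 - n) = deltaPlus q r n := by
  unfold deltaPlus
  have hs : 2 * (((r : ℤ) + 1) / 2) = (r : ℤ) + 1 := by
    obtain ⟨j, hj⟩ := hrodd; omega
  set s : ℤ := ((r : ℤ) + 1) / 2 with hsdef
  have hexp : q ^ (s * ((r : ℤ) - 2 - n) ^ 2 + ((r : ℤ) - 2 - n)) = q ^ (s * n ^ 2 + n) :=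
    zpow_eq_of_aux hq0 h1 (((r : ℤ) - 2 - 2 * n) * (s - 1))
      (by linear_combination (-((r : ℤ) - 2 - 2 * n)) * hs)
  have hqi : qint q (((r : ℤ) - 2 - n) + 1) = - qint q (n + 1) := by
    rw [show ((r : ℤ) - 2 - n) + 1 = (r : ℤ) - n - 1 by ring, qint_symm_aux hq0 h1]
  rw [hexp, hqi, neg_one_zpow_symm_aux hrodd]
  ring

private lemma deltaMinus_symm_aux {q : ℂ} {r : ℕ} (hq0 : q ≠ 0) (h1 : q ^ (r : ℤ) = 1)
    (hrodd : Odd (r : ℤ)) (n : ℤ) :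
    deltaMinus q r ((r : ℤ) - 2 - n) = deltaMinus q r n := by
  unfold deltaMinus
  have hs : 2 * (((r : ℤ) - 1) / 2) = (r : ℤ) - 1 := by
    obtain ⟨j, hj⟩ := hrodd; omega
  set s : ℤ := ((r : ℤ) - 1) / 2 with hsdef
  have hexp : q ^ (s * ((r : ℤ) - 2 - n) ^ 2 - ((r : ℤ) - 2 - n)) = q ^ (s * n ^ 2 - n) :=
    zpow_eq_of_aux hq0 h1 (((r : ℤ) - 2 - 2 * n) * (s - 1))
      (by linear_combination (-((r : ℤ) - 2 - 2 * n)) * hs)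
  have hqi : qint q (((r : ℤ) - 2 - n) + 1) = - qint q (n + 1) := by
    rw [show ((r : ℤ) - 2 - n) + 1 = (r : ℤ) - n - 1 by ring, qint_symm_aux hq0 h1]
  rw [hexp, hqi, neg_one_zpow_symm_aux hrodd]
  ring

private lemma key_sum_aux {q : ℂ} (hq0 : q ≠ 0) {r : ℕ} (h1 : q ^ (r : ℤ) = 1)
    {k : ℕ} (hk : r = 2 * k + 3) (d : ℤ → ℂ)
    (hsym : ∀ n : ℤ, d ((r : ℤ) - 2 - n) = d n) :
    ∑ m ∈ Finset.range (k + 1), qint q (2 * (m : ℤ) + 1) * d (2 * m)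
      = ∑ m ∈ Finset.range (k + 1), (-1 : ℂ) ^ (m : ℤ) * qint q ((m : ℤ) + 1) * d m := by
  refine Finset.sum_nbij' (fun m => if 2 * m ≤ k then 2 * m else 2 * k + 1 - 2 * m)
    (fun n => if n % 2 = 0 then n / 2 else (2 * k + 1 - n) / 2) ?_ ?_ ?_ ?_ ?_
  · intro a ha; simp only [mem_range] at *; split_ifs <;> omega
  · intro a ha; simp only [mem_range] at *; split_ifs <;> omega
  · intro a ha; simp only [mem_range] at ha; split_ifs <;> omega
  · intro a ha; simp only [mem_range] at ha; split_ifs <;> omega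
  · intro m hm
    simp only [mem_range] at hm
    split_ifs with h
    · have hc : ((2 * m : ℕ) : ℤ) = 2 * (m : ℤ) := by push_cast; ring
      rw [hc, Even.neg_one_zpow ⟨(m : ℤ), by ring⟩]
      ring
    · set n : ℕ := 2 * k + 1 - 2 * m with hn
      have hnc : (n : ℤ) = 2 * (k : ℤ) + 1 - 2 * (m : ℤ) := by omega
      have h2m : 2 * (m : ℤ) = (r : ℤ) - 2 - (n : ℤ) := by omega
      rw [h2m, show (r : ℤ) - 2 - (n : ℤ) + 1 = (r : ℤ) - (n : ℤ) - 1 by ring,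
        hsym, qint_symm_aux hq0 h1,
        Odd.neg_one_zpow (⟨(k : ℤ) - (m : ℤ), by omega⟩ : Odd (n : ℤ))]
      ring

theorem delta_sums (r : ℕ) (hr : 3 ≤ r) (hodd : Odd r)
    (q : ℂ) (hq : q = Complex.exp (2 * Real.pi * Complex.I / r)) :
    ((∑ m ∈ Finset.range ((r - 3) / 2 + 1), qint q (2 * (m : ℤ) + 1) * deltaPlus q r (2 * m)
        = ∑ m ∈ Finset.range ((r - 3) / 2 + 1),
            (-1 : ℂ) ^ (m : ℤ) * qint q ((m : ℤ) + 1) * deltaPlus q r m) ∧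
      (∑ m ∈ Finset.range ((r - 3) / 2 + 1),
          (-1 : ℂ) ^ (m : ℤ) * qint q ((m : ℤ) + 1) * deltaPlus q r m
        = ∑ m ∈ Finset.range ((r - 3) / 2 + 1),
            q ^ ((((r : ℤ) + 1) / 2) * (m : ℤ) ^ 2 + m) * qint q ((m : ℤ) + 1) ^ 2)) ∧
    ((∑ m ∈ Finset.range ((r - 3) / 2 + 1), qint q (2 * (m : ℤ) + 1) * deltaMinus q r (2 * m)
        = ∑ m ∈ Finset.range ((r - 3) / 2 + 1),
            (-1 : ℂ) ^ (m : ℤ) * qint q ((m : ℤ) + 1) * deltaMinus q r m) ∧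
      (∑ m ∈ Finset.range ((r - 3) / 2 + 1),
          (-1 : ℂ) ^ (m : ℤ) * qint q ((m : ℤ) + 1) * deltaMinus q r m
        = ∑ m ∈ Finset.range ((r - 3) / 2 + 1),
            q ^ ((((r : ℤ) - 1) / 2) * (m : ℤ) ^ 2 - m) * qint q ((m : ℤ) + 1) ^ 2)) := by
  have hq0 : q ≠ 0 := by rw [hq]; exact Complex.exp_ne_zero _
  have hrC : (r : ℂ) ≠ 0 := Nat.cast_ne_zero.mpr (by omega)
  have h1 : q ^ (r : ℤ) = 1 := by
    rw [zpow_natCast, hq, ← Complex.exp_nat_mul]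
    rw [show (r : ℂ) * (2 * Real.pi * Complex.I / r) = 2 * Real.pi * Complex.I by
      field_simp]
    exact Complex.exp_two_pi_mul_I
  obtain ⟨j, hj⟩ := hodd
  have hrodd : Odd (r : ℤ) := ⟨(j : ℤ), by omega⟩
  have hk : r = 2 * ((r - 3) / 2) + 3 := by omega
  have hsq : ∀ m : ℕ, ((-1 : ℂ)) ^ (m : ℤ) * ((-1 : ℂ)) ^ (m : ℤ) = 1 := by
    intro m
    rw [← zpow_add₀ (by norm_num : (-1 : ℂ) ≠ 0)]
    exact Even.neg_one_zpow ⟨(m : ℤ), rfl⟩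
  refine ⟨⟨key_sum_aux hq0 h1 hk _ (deltaPlus_symm_aux hq0 h1 hrodd), ?_⟩,
    key_sum_aux hq0 h1 hk _ (deltaMinus_symm_aux hq0 h1 hrodd), ?_⟩
  · refine Finset.sum_congr rfl fun m _ => ?_
    unfold deltaPlus
    linear_combination (q ^ ((((r : ℤ) + 1) / 2) * (m : ℤ) ^ 2 + m) * qint q ((m : ℤ) + 1) ^ 2) *
      hsq m
  · refine Finset.sum_congr rfl fun m _ => ?_
    unfold deltaMinus
    linear_combination (q ^ ((((r : ℤ) - 1) / 2) * (m : ℤ) ^ 2 - m) * qint q ((m : ℤ) + 1) ^ 2) *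
      hsq m
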